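/- Consider the augmented system (f_A, g_A, h_A) on ℝ × ℝ^{n_A} built from infinitely differentiable F : ℝ×ℝ^n → ℝ^n, G : ℝ×ℝ^n → ℝ^{n×r}, h : ℝ×ℝ^n → ℝ^m with r = m, and its integral augmented system (f_I, g_I, h_I) on ℝ × ℝ^{n_A+m} for a parameter β > 0. Suppose there exist σ ∈ ℕ^m with σ_k ≥ 1 and a point (t_0, x_A^0) ∈ ℝ × ℝ^{n_A} such that, for each k ∈ {1,…,m}: L_{g_A} L_{f_A}^{i} h_{A,k}(t,x_A) = 0 for all (t,x_A) and all 0 ≤ i ≤ σ_k − 2, and L_{g_A} L_{f_A}^{σ_k−1} h_{A,k}(t_0, x_A^0) ≠ 0. Then: (i) for each k, L_{g_I} L_{f_I}^{i} h_{I,k}(t,x_I) = 0 for all (t,x_I) ∈ ℝ × ℝ^{n_A+m} and all 0 ≤ i ≤ σ_k − 1; (ii) for each k and every ξ ∈ ℝ^m, L_{g_I} L_{f_I}^{σ_k} h_{I,k}(t_0, (x_A^0, ξ)) ≠ 0; and (iii) the matrix Γ_{g_I}(t,x_I) ∈ ℝ^{m×m}, whose k-th row is L_{g_I} L_{f_I}^{σ_k}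 h_{I,k}(t,x_I), has zero i-th column, hence does not have full column rank and is not invertible, at every (t,x_I) with x_I = ((x,z̃),ξ) such that z_i^{(0)} = 0 for some i ∈ {1,…,r}. -/

import Mathlib

noncomputable section

open Real Finset

/-- One-step Lie derivative of a scalar function `ψ` along the time-varying vector field `F`
on a general state space: `L_F ψ (t,x) = (∂ₓ ψ)·F + ∂ₜ ψ`, expressed as the total (Fréchet)
derivative of `ψ` in the direction `(1, F(t,x))`. -/
def lieF {E : Type*} [NormedAddCommGroup E] [NormedSpace ℝ E]
    (F : ℝ × E → E) (ψ : ℝ × E → ℝ) : ℝ × E → ℝ :=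
  fun p => fderiv ℝ ψ p (1, F p)

/-- Iterated Lie derivative `L_F^j ψ`, with `L_F^0 ψ = ψ`. -/
def lieFIter {E : Type*} [NormedAddCommGroup E] [NormedSpace ℝ E]
    (F : ℝ × E → E) (ψ : ℝ × E → ℝ) (j : ℕ) : ℝ × E → ℝ :=
  (lieF F)^[j] ψ

/-- Mixed Lie derivative `L_Ĝ ψ (t,x) = (∂ₓ ψ)(t,x)·Ĝ(t,x) ∈ ℝ^{1×r}` as a row vector,
where the matrix field `Ĝ` is given through its columns `Ĝ(t,x) j ∈ E`. -/
def lieGcol {E : Type*} [NormedAddCommGroup E] [NormedSpace ℝ E] {r : ℕ}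
    (G : ℝ × E → Fin r → E) (ψ : ℝ × E → ℝ) : ℝ × E → Fin r → ℝ :=
  fun p j => fderiv ℝ ψ p (0, G p j)

/-- The augmented state space `x_A = (x, z̃)`, where `z̃` stacks the scalars
`z_k^{(0)}, …, z_k^{(ρ_k-1)}` for `k = 1,…,m`. -/
abbrev AugState (n m : ℕ) (ρ : Fin m → ℕ) : Type :=
  (Fin n → ℝ) × (∀ k : Fin m, Fin (ρ k) → ℝ)

/-- The augmented vector field `f_A`: first block `F(t,x)`; the `k`-th slack block is the
shift `(z_k^{(1)}, …, z_k^{(ρ_k-1)}, 0)`. -/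
def augF {n m : ℕ} (ρ : Fin m → ℕ) (F : ℝ × (Fin n → ℝ) → Fin n → ℝ) :
    ℝ × AugState n m ρ → AugState n m ρ :=
  fun p =>
    (F (p.1, p.2.1),
      fun k i => if hi : (i : ℕ) + 1 < ρ k then p.2.2 k ⟨(i : ℕ) + 1, hi⟩ else 0)

/-- The columns of the augmented input matrix `g_A`: first `n` rows `G(t,x)·D(z)` with
`D(z) = diag(z_1^{(0)},…,z_r^{(0)})`; remaining rows zero, except that the row in the slot
of `z_k^{(ρ_k-1)}` equals the `k`-th standard basis row. -/
def augG {n m : ℕ} (ρ : Fin m → ℕ) (G : ℝ × (Fin n → ℝ) → Fin n → Fin m → ℝ) :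
    ℝ × AugState n m ρ → Fin m → AugState n m ρ :=
  fun p j =>
    ((fun a => G (p.1, p.2.1) a j *
        (if h : 0 < ρ j then p.2.2 j ⟨0, h⟩ else 0)),
      fun k i => if k = j ∧ (i : ℕ) = ρ k - 1 then 1 else 0)

/-- The augmented output `h_A(t,(x,z̃)) = h(t,x)`, `l`-th component. -/
def augH {n m : ℕ} (ρ : Fin m → ℕ) (h : ℝ × (Fin n → ℝ) → Fin m → ℝ) (l : Fin m) :
    ℝ × AugState n m ρ → ℝ :=
  fun p => h (p.1, p.2.1) l

/-- The integral augmented state space `x_I = (x_A, ξ)`. -/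
abbrev IntState (n m : ℕ) (ρ : Fin m → ℕ) : Type :=
  AugState n m ρ × (Fin m → ℝ)

/-- The bounded saturation function `s_β(v) = 2β(1/(e^{-v}+1) - 1/2)` (Eq. (16) of the paper). -/
def sBeta (β v : ℝ) : ℝ := 2 * β * (1 / (Real.exp (-v) + 1) - 1 / 2)

/-- The integral augmented vector field `f_I(t,(x_A,ξ)) = (f_A(t,x_A) + g_A(t,x_A)·s_β(ξ), 0)`. -/
def intF {n m : ℕ} (ρ : Fin m → ℕ) (F : ℝ × (Fin n → ℝ) → Fin n → ℝ)
    (G : ℝ × (Fin n → ℝ) → Fin n → Fin m → ℝ) (β : ℝ) :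
    ℝ × IntState n m ρ → IntState n m ρ :=
  fun p =>
    (augF ρ F (p.1, p.2.1) + ∑ j, sBeta β (p.2.2 j) • augG ρ G (p.1, p.2.1) j, 0)

/-- The columns of the integral augmented input matrix `g_I = (0 ; I_m)`. -/
def intG {n m : ℕ} (ρ : Fin m → ℕ) :
    ℝ × IntState n m ρ → Fin m → IntState n m ρ :=
  fun _ j => (0, Pi.single j 1)

/-- The integral augmented output `h_I(t,(x_A,ξ)) = h_A(t,x_A)`, `l`-th component. -/
def intH {n m : ℕ} (ρ : Fin m → ℕ) (h : ℝ × (Fin n → ℝ) → Fin m → ℝ) (l : Fin m) :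
    ℝ × IntState n m ρ → ℝ :=
  fun p => augH ρ h l (p.1, p.2.1)

section Aux

variable {n m : ℕ}

lemma one_le_topE : ((⊤ : ℕ∞) : WithTop ℕ∞) ≠ 0 := by
  simp

lemma lieF_contDiff {E : Type*} [NormedAddCommGroup E] [NormedSpace ℝ E]
    {F : ℝ × E → E} {ψ : ℝ × E → ℝ}
    (hF : ContDiff ℝ (⊤ : ℕ∞) F) (hψ : ContDiff ℝ (⊤ : ℕ∞) ψ) :
    ContDiff ℝ (⊤ : ℕ∞) (lieF F ψ) :=
  (hψ.fderiv_right (by exact_mod_cast le_top)).clm_apply (contDiff_const.prodMk hF)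

lemma lieFIter_contDiff {E : Type*} [NormedAddCommGroup E] [NormedSpace ℝ E]
    {F : ℝ × E → E} {ψ : ℝ × E → ℝ}
    (hF : ContDiff ℝ (⊤ : ℕ∞) F) (hψ : ContDiff ℝ (⊤ : ℕ∞) ψ) (j : ℕ) :
    ContDiff ℝ (⊤ : ℕ∞) (lieFIter F ψ j) := by
  induction j with
  | zero => exact hψ
  | succ j ih =>
    rw [lieFIter, Function.iterate_succ_apply']
    exact lieF_contDiff hF ih

def projA (n m : ℕ) (ρ : Fin m → ℕ) : (ℝ × AugState n m ρ) →L[ℝ] ℝ × (Fin n → ℝ) :=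
  (ContinuousLinearMap.fst ℝ ℝ (AugState n m ρ)).prod
    ((ContinuousLinearMap.fst ℝ (Fin n → ℝ) (∀ k : Fin m, Fin (ρ k) → ℝ)).comp
      (ContinuousLinearMap.snd ℝ ℝ (AugState n m ρ)))

@[simp] lemma projA_apply (ρ : Fin m → ℕ) (p : ℝ × AugState n m ρ) :
    projA n m ρ p = (p.1, p.2.1) := rfl

def projI (n m : ℕ) (ρ : Fin m → ℕ) : (ℝ × IntState n m ρ) →L[ℝ] ℝ × (Fin n → ℝ) :=
  (ContinuousLinearMap.fst ℝ ℝ (IntState n m ρ)).prod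
    ((ContinuousLinearMap.fst ℝ (Fin n → ℝ) (∀ k : Fin m, Fin (ρ k) → ℝ)).comp
      ((ContinuousLinearMap.fst ℝ (AugState n m ρ) (Fin m → ℝ)).comp
        (ContinuousLinearMap.snd ℝ ℝ (IntState n m ρ))))

@[simp] lemma projI_apply (ρ : Fin m → ℕ) (p : ℝ × IntState n m ρ) :
    projI n m ρ p = (p.1, p.2.1.1) := rfl

lemma fderiv_comp_clm_apply {E E' : Type*} [NormedAddCommGroup E] [NormedSpace ℝ E]
    [NormedAddCommGroup E'] [NormedSpace ℝ E']
    {ψ : E → ℝ} (L : E' →L[ℝ] E) (p : E') (hψ : DifferentiableAt ℝ ψ (L p)) (v : E') :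
    fderiv ℝ (fun q => ψ (L q)) p v = fderiv ℝ ψ (L p) (L v) := by
  rw [show (fun q => ψ (L q)) = ψ ∘ L from rfl, fderiv_comp p hψ L.differentiableAt,
    L.fderiv]
  rfl

end Aux

section Aux2

variable {n m : ℕ} {ρ : Fin m → ℕ}
  {F : ℝ × (Fin n → ℝ) → Fin n → ℝ}
  {G : ℝ × (Fin n → ℝ) → Fin n → Fin m → ℝ}
  {h : ℝ × (Fin n → ℝ) → Fin m → ℝ}

/-- The "decoupled" Lie derivative `∂ₓ χ · G_j` appearing in the computations. -/
def Dfun (G : ℝ × (Fin n → ℝ) → Fin n → Fin m → ℝ) (χ : ℝ × (Fin n → ℝ) → ℝ) (j : Fin m) :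
    ℝ × (Fin n → ℝ) → ℝ :=
  fun q => fderiv ℝ χ q (0, fun a => G q a j)

lemma Gcol_contDiff (hG : ContDiff ℝ (⊤ : ℕ∞) G) (j : Fin m) :
    ContDiff ℝ (⊤ : ℕ∞) (fun q => (fun a => G q a j)) :=
  contDiff_pi.mpr fun a => contDiff_pi.mp (contDiff_pi.mp hG a) j

lemma Dfun_contDiff (hG : ContDiff ℝ (⊤ : ℕ∞) G) {χ : ℝ × (Fin n → ℝ) → ℝ}
    (hχ : ContDiff ℝ (⊤ : ℕ∞) χ) (j : Fin m) :
    ContDiff ℝ (⊤ : ℕ∞) (Dfun G χ j) :=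
  (hχ.fderiv_right (by exact_mod_cast le_top)).clm_apply
    (contDiff_const.prodMk (Gcol_contDiff hG j))

lemma augIter_eq (hF : ContDiff ℝ (⊤ : ℕ∞) F) (hh : ContDiff ℝ (⊤ : ℕ∞) h)
    (k : Fin m) (i : ℕ) :
    lieFIter (augF ρ F) (augH ρ h k) i
      = fun p => lieFIter F (fun q => h q k) i (projA n m ρ p) := by
  induction i with
  | zero => rfl
  | succ i ih =>
    have hχ : ContDiff ℝ (⊤ : ℕ∞) (lieFIter F (fun q => h q k) i) :=
      lieFIter_contDiff hF (contDiff_pi.mp hh k) i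
    funext p
    show (lieF (augF ρ F))^[i+1] (augH ρ h k) p = _
    rw [Function.iterate_succ_apply']
    show lieF (augF ρ F) (lieFIter (augF ρ F) (augH ρ h k) i) p = _
    rw [ih]
    show fderiv ℝ (fun q => lieFIter F (fun q => h q k) i (projA n m ρ q)) p
        (1, augF ρ F p) = _
    rw [fderiv_comp_clm_apply _ _ ((hχ.differentiable one_le_topE).differentiableAt)]
    show fderiv ℝ (lieFIter F (fun q => h q k) i) (p.1, p.2.1)
        (1, F (p.1, p.2.1)) = _
    rw [show lieFIter F (fun q => h q k) (i+1)
        = lieF F (lieFIter F (fun q => h q k) i) from Function.iterate_succ_apply' _ _ _]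
    rfl

lemma lieGcol_aug (hρ : ∀ k, 1 ≤ ρ k) {χ : ℝ × (Fin n → ℝ) → ℝ}
    (hχ : ContDiff ℝ (⊤ : ℕ∞) χ) (p : ℝ × AugState n m ρ) (j : Fin m) :
    lieGcol (augG ρ G) (fun q => χ (projA n m ρ q)) p j
      = p.2.2 j ⟨0, hρ j⟩ * Dfun G χ j (p.1, p.2.1) := by
  show fderiv ℝ (fun q => χ (projA n m ρ q)) p (0, augG ρ G p j) = _
  rw [fderiv_comp_clm_apply _ _ ((hχ.differentiable one_le_topE).differentiableAt)]
  have hv : (projA n m ρ) (0, augG ρ G p j)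
      = p.2.2 j ⟨0, hρ j⟩ • ((0 : ℝ), fun a => G (p.1, p.2.1) a j) := by
    refine Prod.ext (by simp) ?_
    funext a
    show G (p.1, p.2.1) a j * (if h : 0 < ρ j then p.2.2 j ⟨0, h⟩ else 0)
        = p.2.2 j ⟨0, hρ j⟩ * G (p.1, p.2.1) a j
    rw [dif_pos (show 0 < ρ j from hρ j), mul_comm]
  rw [hv, (fderiv ℝ χ _).map_smul]
  rfl

lemma Dzero (hρ : ∀ k, 1 ≤ ρ k) (hF : ContDiff ℝ (⊤ : ℕ∞) F)
    (hG : ContDiff ℝ (⊤ : ℕ∞) G) (hh : ContDiff ℝ (⊤ : ℕ∞) h)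
    {σ : Fin m → ℕ}
    (hzero : ∀ k : Fin m, ∀ i : ℕ, i + 2 ≤ σ k →
      ∀ p : ℝ × AugState n m ρ,
        lieGcol (augG ρ G) (lieFIter (augF ρ F) (augH ρ h k) i) p = 0)
    (k : Fin m) (i : ℕ) (hi : i + 2 ≤ σ k) (q : ℝ × (Fin n → ℝ)) (j : Fin m) :
    Dfun G (lieFIter F (fun q => h q k) i) j q = 0 := by
  have hχ : ContDiff ℝ (⊤ : ℕ∞) (lieFIter F (fun q => h q k) i) :=
    lieFIter_contDiff hF (contDiff_pi.mp hh k) i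
  have h0 := congrFun (hzero k i hi (q.1, (q.2, fun _ _ => 1))) j
  rw [augIter_eq hF hh, lieGcol_aug hρ hχ] at h0
  simpa using h0


lemma lieF_int (hρ : ∀ k, 1 ≤ ρ k) {β : ℝ} {χ : ℝ × (Fin n → ℝ) → ℝ}
    (hχ : ContDiff ℝ (⊤ : ℕ∞) χ) (p : ℝ × IntState n m ρ) :
    lieF (intF ρ F G β) (fun q => χ (projI n m ρ q)) p
      = lieF F χ (p.1, p.2.1.1)
        + ∑ j, sBeta β (p.2.2 j) *
            (p.2.1.2 j ⟨0, hρ j⟩ * Dfun G χ j (p.1, p.2.1.1)) := by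
  show fderiv ℝ (fun q => χ (projI n m ρ q)) p (1, intF ρ F G β p) = _
  rw [fderiv_comp_clm_apply _ _ ((hχ.differentiable one_le_topE).differentiableAt)]
  have hsplit : (projI n m ρ) (1, intF ρ F G β p)
      = ((1:ℝ), F (p.1, p.2.1.1))
        + ∑ j, (sBeta β (p.2.2 j) * p.2.1.2 j ⟨0, hρ j⟩) •
            ((0 : ℝ), fun a => G (p.1, p.2.1.1) a j) := by
    refine Prod.ext ?_ ?_
    · simp [Prod.fst_sum]
    · show (augF ρ F (p.1, p.2.1)).1
          + (∑ j, sBeta β (p.2.2 j) • augG ρ G (p.1, p.2.1) j).1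
        = F (p.1, p.2.1.1)
          + (∑ j, (sBeta β (p.2.2 j) * p.2.1.2 j ⟨0, hρ j⟩) •
              ((0 : ℝ), fun a => G (p.1, p.2.1.1) a j)).2
      rw [Prod.fst_sum, Prod.snd_sum]
      refine congrArg (F (p.1, p.2.1.1) + ·) (Finset.sum_congr rfl fun j _ => ?_)
      funext a
      show sBeta β (p.2.2 j) *
          (G (p.1, p.2.1.1) a j * if h : 0 < ρ j then p.2.1.2 j ⟨0, h⟩ else 0)
        = (sBeta β (p.2.2 j) * p.2.1.2 j ⟨0, hρ j⟩) * G (p.1, p.2.1.1) a j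
      rw [dif_pos (show 0 < ρ j from hρ j)]
      ring
  rw [hsplit, (fderiv ℝ χ _).map_add,
    map_sum (fderiv ℝ χ ((projI n m ρ) p)) _ Finset.univ]
  refine congrArg₂ (· + ·) rfl ?_
  refine Finset.sum_congr rfl fun j _ => ?_
  rw [(fderiv ℝ χ _).map_smul]
  show (sBeta β (p.2.2 j) * p.2.1.2 j ⟨0, hρ j⟩) * Dfun G χ j (p.1, p.2.1.1) = _
  ring

lemma intIter_eq (hρ : ∀ k, 1 ≤ ρ k) (hF : ContDiff ℝ (⊤ : ℕ∞) F)
    (hG : ContDiff ℝ (⊤ : ℕ∞) G) (hh : ContDiff ℝ (⊤ : ℕ∞) h) {β : ℝ}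
    {σ : Fin m → ℕ}
    (hzero : ∀ k : Fin m, ∀ i : ℕ, i + 2 ≤ σ k →
      ∀ p : ℝ × AugState n m ρ,
        lieGcol (augG ρ G) (lieFIter (augF ρ F) (augH ρ h k) i) p = 0)
    (k : Fin m) (i : ℕ) (hi : i + 1 ≤ σ k) :
    lieFIter (intF ρ F G β) (intH ρ h k) i
      = fun p => lieFIter F (fun q => h q k) i (projI n m ρ p) := by
  induction i with
  | zero => rfl
  | succ i ih =>
    have hχ : ContDiff ℝ (⊤ : ℕ∞) (lieFIter F (fun q => h q k) i) :=
      lieFIter_contDiff hF (contDiff_pi.mp hh k) i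
    funext p
    show (lieF (intF ρ F G β))^[i+1] (intH ρ h k) p = _
    rw [Function.iterate_succ_apply']
    show lieF (intF ρ F G β) (lieFIter (intF ρ F G β) (intH ρ h k) i) p = _
    rw [ih (by omega), lieF_int hρ hχ]
    have hz : ∑ j, sBeta β (p.2.2 j) *
        (p.2.1.2 j ⟨0, hρ j⟩ * Dfun G (lieFIter F (fun q => h q k) i) j (p.1, p.2.1.1)) = 0 := by
      refine Finset.sum_eq_zero fun j _ => ?_
      rw [Dzero hρ hF hG hh hzero k i (by omega)]
      ring
    rw [hz, add_zero]
    rw [show lieFIter F (fun q => h q k) (i+1)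
        = lieF F (lieFIter F (fun q => h q k) i) from Function.iterate_succ_apply' _ _ _]
    rfl


lemma hasDerivAt_sBeta (β x : ℝ) :
    HasDerivAt (sBeta β) (2 * β * (Real.exp (-x) / (Real.exp (-x) + 1)^2)) x := by
  have h1 : HasDerivAt (fun v : ℝ => Real.exp (-v) + 1) (-Real.exp (-x)) x := by
    have := (Real.hasDerivAt_exp (-x)).comp x ((hasDerivAt_id x).neg)
    simpa using this.add_const 1
  have hne : Real.exp (-x) + 1 ≠ 0 := by positivity
  have h2 : HasDerivAt (fun v : ℝ => (Real.exp (-v) + 1)⁻¹)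
      (Real.exp (-x) / (Real.exp (-x) + 1)^2) x := by
    have := h1.inv hne
    simp only [neg_div, neg_neg] at this
    exact this
  have h3 := (h2.sub_const (1/2)).const_mul (2*β)
  have hfun : (fun v : ℝ => 2*β * ((Real.exp (-v) + 1)⁻¹ - 1/2)) = sBeta β := by
    funext v; simp [sBeta, one_div]
  rw [hfun] at h3
  simpa [mul_div_assoc] using h3

lemma lieGcol_int_top (hρ : ∀ k, 1 ≤ ρ k) (hF : ContDiff ℝ (⊤ : ℕ∞) F)
    (hG : ContDiff ℝ (⊤ : ℕ∞) G) (hh : ContDiff ℝ (⊤ : ℕ∞) h) {β : ℝ}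
    {σ : Fin m → ℕ} (hσ : ∀ k, 1 ≤ σ k)
    (hzero : ∀ k : Fin m, ∀ i : ℕ, i + 2 ≤ σ k →
      ∀ p : ℝ × AugState n m ρ,
        lieGcol (augG ρ G) (lieFIter (augF ρ F) (augH ρ h k) i) p = 0)
    (k : Fin m) (p : ℝ × IntState n m ρ) (j' : Fin m) :
    lieGcol (intG ρ) (lieFIter (intF ρ F G β) (intH ρ h k) (σ k)) p j'
      = (2 * β * (Real.exp (-(p.2.2 j')) / (Real.exp (-(p.2.2 j')) + 1)^2))
        * (p.2.1.2 j' ⟨0, hρ j'⟩ *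
            Dfun G (lieFIter F (fun q => h q k) (σ k - 1)) j' (p.1, p.2.1.1)) := by
  set χ' := lieFIter F (fun q => h q k) (σ k - 1) with hχ'def
  have hχ' : ContDiff ℝ (⊤ : ℕ∞) χ' := lieFIter_contDiff hF (contDiff_pi.mp hh k) _
  obtain ⟨s, hs⟩ : ∃ s, σ k = s + 1 := ⟨σ k - 1, by have := hσ k; omega⟩
  have hs1 : σ k - 1 = s := by omega
  have hψ : lieFIter (intF ρ F G β) (intH ρ h k) (σ k)
      = fun q => lieF F χ' (q.1, q.2.1.1)
          + ∑ j, sBeta β (q.2.2 j) *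
              (q.2.1.2 j ⟨0, hρ j⟩ * Dfun G χ' j (q.1, q.2.1.1)) := by
    funext q
    rw [hs]
    show (lieF (intF ρ F G β))^[s+1] (intH ρ h k) q = _
    rw [Function.iterate_succ_apply']
    show lieF (intF ρ F G β) (lieFIter (intF ρ F G β) (intH ρ h k) s) q = _
    rw [intIter_eq hρ hF hG hh hzero k s (by omega), hχ'def, hs1]
    exact lieF_int hρ (by rw [hχ'def, hs1] at hχ'; exact hχ') q
  -- now compute the fderiv
  have hA : HasFDerivAt (fun q : ℝ × IntState n m ρ => lieF F χ' (q.1, q.2.1.1))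
      ((fderiv ℝ (lieF F χ') (projI n m ρ p)).comp (projI n m ρ)) p :=
    (((lieF_contDiff hF hχ').differentiable one_le_topE) _).hasFDerivAt.comp p
      ((projI n m ρ).hasFDerivAt)
  let ℓ : Fin m → (ℝ × IntState n m ρ) →L[ℝ] ℝ := fun j =>
    (ContinuousLinearMap.proj j).comp
      ((ContinuousLinearMap.snd ℝ (AugState n m ρ) (Fin m → ℝ)).comp
        (ContinuousLinearMap.snd ℝ ℝ (IntState n m ρ)))
  let ζ : Fin m → (ℝ × IntState n m ρ) →L[ℝ] ℝ := fun j =>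
    (ContinuousLinearMap.proj (⟨0, hρ j⟩ : Fin (ρ j))).comp
      ((ContinuousLinearMap.proj j).comp
        ((ContinuousLinearMap.snd ℝ (Fin n → ℝ) (∀ k : Fin m, Fin (ρ k) → ℝ)).comp
          ((ContinuousLinearMap.fst ℝ (AugState n m ρ) (Fin m → ℝ)).comp
            (ContinuousLinearMap.snd ℝ ℝ (IntState n m ρ)))))
  have hu : ∀ j : Fin m, HasFDerivAt (fun q : ℝ × IntState n m ρ => sBeta β (q.2.2 j))
      ((2 * β * (Real.exp (-(p.2.2 j)) / (Real.exp (-(p.2.2 j)) + 1)^2)) • ℓ j) p :=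
    fun j => (hasDerivAt_sBeta β (p.2.2 j)).comp_hasFDerivAt (h₂ := sBeta β) (f := ⇑(ℓ j)) p ((ℓ j).hasFDerivAt)
  have hv : ∀ j : Fin m, HasFDerivAt
      (fun q : ℝ × IntState n m ρ => q.2.1.2 j ⟨0, hρ j⟩) (ζ j) p :=
    fun j => (ζ j).hasFDerivAt
  have hw : ∀ j : Fin m, HasFDerivAt
      (fun q : ℝ × IntState n m ρ => Dfun G χ' j (q.1, q.2.1.1))
      ((fderiv ℝ (Dfun G χ' j) (projI n m ρ p)).comp (projI n m ρ)) p :=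
    fun j => (((Dfun_contDiff hG hχ' j).differentiable one_le_topE) _).hasFDerivAt.comp p
      ((projI n m ρ).hasFDerivAt)
  have htotal := hA.add (HasFDerivAt.sum (fun j (_ : j ∈ Finset.univ) =>
    (hu j).mul ((hv j).mul (hw j))))
  show fderiv ℝ (lieFIter (intF ρ F G β) (intH ρ h k) (σ k)) p (0, intG ρ p j') = _
  have htotal' : HasFDerivAt (fun q : ℝ × IntState n m ρ => lieF F χ' (q.1, q.2.1.1)
      + ∑ j, sBeta β (q.2.2 j) * (q.2.1.2 j ⟨0, hρ j⟩ * Dfun G χ' j (q.1, q.2.1.1))) _ p :=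
    htotal.congr_of_eventuallyEq (Filter.Eventually.of_forall fun q => by
      simp [Finset.sum_apply])
  rw [hψ, htotal'.fderiv]
  show ((fderiv ℝ (lieF F χ') (projI n m ρ p)).comp (projI n m ρ)
      + ∑ j, (sBeta β (p.2.2 j) •
            (p.2.1.2 j ⟨0, hρ j⟩ • ((fderiv ℝ (Dfun G χ' j) (projI n m ρ p)).comp (projI n m ρ))
              + Dfun G χ' j (p.1, p.2.1.1) • ζ j)
          + (p.2.1.2 j ⟨0, hρ j⟩ * Dfun G χ' j (p.1, p.2.1.1)) •
              ((2 * β * (Real.exp (-(p.2.2 j)) / (Real.exp (-(p.2.2 j)) + 1)^2)) • ℓ j)))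
      (0, intG ρ p j') = _
  have hz : (projI n m ρ) ((0 : ℝ × IntState n m ρ).1, intG ρ p j') = 0 := rfl
  simp only [ContinuousLinearMap.add_apply, ContinuousLinearMap.sum_apply,
    ContinuousLinearMap.smul_apply, ContinuousLinearMap.coe_comp', Function.comp_apply,
    smul_eq_mul]
  rw [show (projI n m ρ) (0, intG ρ p j') = 0 from rfl, map_zero]
  have hℓ : ∀ j : Fin m, ℓ j (0, intG ρ p j') = if j = j' then 1 else 0 := fun j => by
    rw [show (ℓ j) (0, intG ρ p j') = (Pi.single j' (1:ℝ) : Fin m → ℝ) j from rfl, Pi.single_apply]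
  have hζ : ∀ j : Fin m, ζ j (0, intG ρ p j') = 0 := fun j => rfl
  simp only [hℓ, hζ, map_zero, mul_zero, add_zero, zero_add, mul_ite, mul_one]
  rw [Finset.sum_ite_eq' Finset.univ j']
  simp only [Finset.mem_univ, if_true]
  ring

end Aux2

/-- **Corollary 1 of the paper.** The relative degree of the integral augmented system
exceeds that of the augmented system by one: (i) `L_{g_I} L_{f_I}^i h_{I,k} ≡ 0` for
`0 ≤ i ≤ σ_k - 1`; (ii) `L_{g_I} L_{f_I}^{σ_k} h_{I,k}(t₀,(x_A⁰,ξ)) ≠ 0` for every `ξ`;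
and (iii) the matrix `Γ_{g_I}`, whose `k`-th row is `L_{g_I} L_{f_I}^{σ_k} h_{I,k}`, has a
zero `i₀`-th column — hence does not have full column rank and is not invertible —
wherever the slack variable `z_{i₀}^{(0)}` vanishes. -/
theorem integral_system_relative_degree_and_rank_loss
    {n m : ℕ} (ρ : Fin m → ℕ) (hρ : ∀ k, 1 ≤ ρ k)
    (F : ℝ × (Fin n → ℝ) → Fin n → ℝ)
    (G : ℝ × (Fin n → ℝ) → Fin n → Fin m → ℝ)
    (h : ℝ × (Fin n → ℝ) → Fin m → ℝ)
    (hF : ContDiff ℝ (⊤ : ℕ∞) F) (hG : ContDiff ℝ (⊤ : ℕ∞) G)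
    (hh : ContDiff ℝ (⊤ : ℕ∞) h)
    (β : ℝ) (hβ : 0 < β)
    (σ : Fin m → ℕ) (hσ : ∀ k, 1 ≤ σ k)
    (hzero : ∀ k : Fin m, ∀ i : ℕ, i + 2 ≤ σ k →
      ∀ p : ℝ × AugState n m ρ,
        lieGcol (augG ρ G) (lieFIter (augF ρ F) (augH ρ h k) i) p = 0)
    (t₀ : ℝ) (xA₀ : AugState n m ρ)
    (hne : ∀ k : Fin m,
      lieGcol (augG ρ G) (lieFIter (augF ρ F) (augH ρ h k) (σ k - 1)) (t₀, xA₀) ≠ 0) :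
    -- (i)
    (∀ k : Fin m, ∀ i : ℕ, i ≤ σ k - 1 → ∀ p : ℝ × IntState n m ρ,
      lieGcol (intG ρ) (lieFIter (intF ρ F G β) (intH ρ h k) i) p = 0) ∧
    -- (ii)
    (∀ k : Fin m, ∀ ξ : Fin m → ℝ,
      lieGcol (intG ρ) (lieFIter (intF ρ F G β) (intH ρ h k) (σ k)) (t₀, (xA₀, ξ)) ≠ 0) ∧
    -- (iii)
    (∀ (t : ℝ) (x : Fin n → ℝ) (z : ∀ k : Fin m, Fin (ρ k) → ℝ) (ξ : Fin m → ℝ)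
        (i₀ : Fin m), z i₀ ⟨0, hρ i₀⟩ = 0 →
      (∀ k : Fin m,
        lieGcol (intG ρ) (lieFIter (intF ρ F G β) (intH ρ h k) (σ k)) (t, ((x, z), ξ)) i₀
          = 0) ∧
      ((Matrix.of fun k j =>
          lieGcol (intG ρ) (lieFIter (intF ρ F G β) (intH ρ h k) (σ k)) (t, ((x, z), ξ)) j :
        Matrix (Fin m) (Fin m) ℝ)).rank < m ∧
      ¬ IsUnit ((Matrix.of fun k j =>
          lieGcol (intG ρ) (lieFIter (intF ρ F G β) (intH ρ h k) (σ k)) (t, ((x, z), ξ)) j :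
        Matrix (Fin m) (Fin m) ℝ))) := by
  have hhk : ∀ k : Fin m, ContDiff ℝ (⊤ : ℕ∞) (fun q => h q k) := fun k => contDiff_pi.mp hh k
  -- part (i)
  have part1 : ∀ k : Fin m, ∀ i : ℕ, i ≤ σ k - 1 → ∀ p : ℝ × IntState n m ρ,
      lieGcol (intG ρ) (lieFIter (intF ρ F G β) (intH ρ h k) i) p = 0 := by
    intro k i hi p
    have hχ : ContDiff ℝ (⊤ : ℕ∞) (lieFIter F (fun q => h q k) i) :=
      lieFIter_contDiff hF (hhk k) i
    rw [intIter_eq hρ hF hG hh hzero k i (by have := hσ k; omega)]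
    funext j
    show fderiv ℝ (fun q => lieFIter F (fun q => h q k) i (projI n m ρ q)) p
        (0, intG ρ p j) = (0 : Fin m → ℝ) j
    rw [fderiv_comp_clm_apply _ _ ((hχ.differentiable one_le_topE).differentiableAt),
      show (projI n m ρ) ((0 : ℝ), intG ρ p j) = 0 from rfl, map_zero]
    rfl
  refine ⟨part1, ?_, ?_⟩
  -- part (ii)
  · intro k ξ hc
    have hχ' : ContDiff ℝ (⊤ : ℕ∞) (lieFIter F (fun q => h q k) (σ k - 1)) :=
      lieFIter_contDiff hF (hhk k) _
    have hne' := hne k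
    rw [augIter_eq hF hh] at hne'
    have hex : ∃ j : Fin m,
        lieGcol (augG ρ G) (fun p => lieFIter F (fun q => h q k) (σ k - 1) (projA n m ρ p))
          (t₀, xA₀) j ≠ 0 := by
      by_contra hall
      push_neg at hall
      exact hne' (funext fun j => hall j)
    obtain ⟨j, hj⟩ := hex
    rw [lieGcol_aug hρ hχ'] at hj
    have hcj := congrFun hc j
    rw [lieGcol_int_top hρ hF hG hh hσ hzero k (t₀, (xA₀, ξ)) j] at hcj
    have hcpos : 0 < 2 * β * (Real.exp (-(ξ j)) / (Real.exp (-(ξ j)) + 1)^2) := by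
      positivity
    have : xA₀.2 j ⟨0, hρ j⟩ *
        Dfun G (lieFIter F (fun q => h q k) (σ k - 1)) j (t₀, xA₀.1) = 0 := by
      rcases mul_eq_zero.mp hcj with h1 | h1
      · exact absurd h1 (ne_of_gt hcpos)
      · exact h1
    exact hj this
  -- part (iii)
  · intro t x z ξ i₀ hz0
    have hcol : ∀ k : Fin m,
        lieGcol (intG ρ) (lieFIter (intF ρ F G β) (intH ρ h k) (σ k)) (t, ((x, z), ξ)) i₀
          = 0 := by
      intro k
      rw [lieGcol_int_top hρ hF hG hh hσ hzero k (t, ((x, z), ξ)) i₀]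
      show _ * (z i₀ ⟨0, hρ i₀⟩ * _) = 0
      rw [hz0, zero_mul, mul_zero]
    refine ⟨hcol, ?_, ?_⟩
    · set M : Matrix (Fin m) (Fin m) ℝ := Matrix.of fun k j =>
        lieGcol (intG ρ) (lieFIter (intF ρ F G β) (intH ρ h k) (σ k)) (t, ((x, z), ξ)) j
      have hker : M.mulVecLin (Pi.single i₀ 1) = 0 := by
        funext i
        show M.mulVec (Pi.single i₀ 1) i = 0
        rw [Matrix.mulVec_single]
        show M i i₀ * 1 = 0
        rw [mul_one]
        exact hcol i
      have h1 : LinearMap.ker M.mulVecLin ≠ ⊥ := by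
        intro hb
        have h2 := (LinearMap.ker_eq_bot'.mp hb) (Pi.single i₀ 1) hker
        have h3 : (Pi.single i₀ 1 : Fin m → ℝ) i₀ = 0 := by rw [h2]; rfl
        simp at h3
      have h2 := LinearMap.finrank_range_add_finrank_ker (M.mulVecLin)
      have h3 : 0 < Module.finrank ℝ (LinearMap.ker M.mulVecLin) := by
        rw [Module.finrank_pos_iff]
        exact Submodule.nontrivial_iff_ne_bot.mpr h1
      have h4 : Module.finrank ℝ (Fin m → ℝ) = m := by simp
      rw [Matrix.rank]
      omega
    · intro hu
      set M : Matrix (Fin m) (Fin m) ℝ := Matrix.of fun k j =>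
        lieGcol (intG ρ) (lieFIter (intF ρ F G β) (intH ρ h k) (σ k)) (t, ((x, z), ξ)) j
      have h5 := hu.map (Matrix.detMonoidHom (n := Fin m) (R := ℝ))
      simp only [Matrix.coe_detMonoidHom] at h5
      have h6 : M.det = 0 :=
        Matrix.det_eq_zero_of_column_eq_zero (A := M) i₀ (fun i => hcol i)
      rw [h6] at h5
      simp at h5
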